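/- Let k be a field of characteristic p > 0. Then the maximal perfect subfield of the Laurent series field k((t)) equals the maximal perfect subfield of k, i.e. k((t))^{p^∞} = k^{p^∞}. -/

import Mathlib

/-- The maximal perfect subfield `L^{p^∞} = ⋂_n L^{p^n}` of a field `L`
(in characteristic `p`, `Subfield.closure (Set.range (· ^ p ^ n))` is exactly the subfield of
`p^n`-th powers). -/
def perfectCore (L : Type*) [Field L] (p : ℕ) : Subfield L :=
  ⨅ n : ℕ, Subfield.closure (Set.range (· ^ p ^ n))

lemma mem_perfectCore_iff {L : Type*} [Field L] {p : ℕ} (hp : p.Prime) [CharP L p] {x : L} :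
    x ∈ perfectCore L p ↔ ∀ n : ℕ, ∃ y : L, y ^ p ^ n = x := by
  haveI : Fact p.Prime := ⟨hp⟩
  have h : ∀ n : ℕ, Subfield.closure (Set.range (· ^ p ^ n))
      = (iterateFrobenius L p n).fieldRange := by
    intro n
    have : Set.range (fun x : L => x ^ p ^ n) = ↑(iterateFrobenius L p n).fieldRange := by
      ext y
      simp [RingHom.mem_fieldRange, iterateFrobenius_def, eq_comm]
    rw [this, Subfield.closure_eq]
  simp only [perfectCore, Subfield.mem_iInf, h, RingHom.mem_fieldRange, iterateFrobenius_def]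

lemma HahnSeries.leadingCoeff_eq_coeff_order {Γ R : Type*} [Zero R]
    [AddCommMonoid Γ] [LinearOrder Γ] [IsOrderedCancelAddMonoid Γ] {x : HahnSeries Γ R} (hx : x ≠ 0) :
    x.leadingCoeff = x.coeff x.order := by
  rw [leadingCoeff_eq]

lemma HahnSeries.leadingCoeff_mul' {Γ R : Type*} [Field R]
    [AddCommMonoid Γ] [LinearOrder Γ] [IsOrderedCancelAddMonoid Γ] {x y : HahnSeries Γ R} (hx : x ≠ 0) (hy : y ≠ 0) :
    (x * y).leadingCoeff = x.leadingCoeff * y.leadingCoeff := by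
  rw [HahnSeries.leadingCoeff_eq_coeff_order (mul_ne_zero hx hy), order_mul hx hy,
    coeff_mul_order_add_order]

lemma HahnSeries.leadingCoeff_pow' {Γ R : Type*} [Field R]
    [AddCommMonoid Γ] [LinearOrder Γ] [IsOrderedCancelAddMonoid Γ] {x : HahnSeries Γ R} (hx : x ≠ 0) (n : ℕ) :
    (x ^ n).leadingCoeff = x.leadingCoeff ^ n := by
  induction n with
  | zero => simp
  | succ n ih =>
    rw [pow_succ, HahnSeries.leadingCoeff_mul' (pow_ne_zero _ hx) hx, ih, pow_succ]

/-- An integer divisible by all powers of a prime is zero. -/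
lemma int_eq_zero_of_forall_prime_pow_dvd {p : ℕ} (hp : p.Prime) {d : ℤ}
    (h : ∀ n : ℕ, (p : ℤ) ^ n ∣ d) : d = 0 := by
  by_contra hd
  obtain ⟨n, hn⟩ := pow_unbounded_of_one_lt (|d|) (by exact_mod_cast hp.one_lt : (1 : ℤ) < p)
  exact absurd (Int.le_of_dvd (abs_pos.2 hd) ((dvd_abs _ _).2 (h n))) (not_le.2 hn)

/-- If a nonzero Laurent series has `p^n`-th roots for all `n`, its order is zero. -/
lemma order_eq_zero_of_roots {k : Type*} [Field k] {p : ℕ} (hp : p.Prime)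
    {f : LaurentSeries k} (hf0 : f ≠ 0) (hf : ∀ n : ℕ, ∃ g : LaurentSeries k, g ^ p ^ n = f) :
    f.order = 0 := by
  apply int_eq_zero_of_forall_prime_pow_dvd hp
  intro n
  obtain ⟨g, hg⟩ := hf n
  have hg0 : g ≠ 0 := by
    rintro rfl
    rw [zero_pow (pow_pos hp.pos n).ne'] at hg
    exact hf0 hg.symm
  refine ⟨g.order, ?_⟩
  rw [← hg, HahnSeries.order_pow, nsmul_eq_mul]
  push_cast
  ring

/-- For a field `k` of characteristic `p > 0`, the maximal perfect subfield
of the Laurent series field `k((t))` equals (the image of) the maximal perfect subfield of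
`k`: `k((t))^{p^∞} = k^{p^∞}`. -/
theorem perfectCore_laurentSeries {k : Type u} [Field k] (p : ℕ) (hp : p.Prime) [CharP k p] :
    perfectCore (LaurentSeries k) p =
      (perfectCore k p).map (algebraMap k (LaurentSeries k)) := by
  haveI : CharP (LaurentSeries k) p :=
    charP_of_injective_algebraMap (algebraMap k (LaurentSeries k)).injective p
  apply le_antisymm
  · intro f hf
    rw [mem_perfectCore_iff hp] at hf
    rcases eq_or_ne f 0 with rfl | hf0
    · exact ⟨0, Subfield.zero_mem _, map_zero _⟩
    have horder : f.order = 0 := order_eq_zero_of_roots hp hf0 hf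
    set a := f.leadingCoeff with ha
    -- a is in the perfect core of k
    have hamem : a ∈ perfectCore k p := by
      rw [mem_perfectCore_iff hp]
      intro n
      obtain ⟨g, hg⟩ := hf n
      have hg0 : g ≠ 0 := by
        rintro rfl
        rw [zero_pow (pow_pos hp.pos n).ne'] at hg
        exact hf0 hg.symm
      refine ⟨g.leadingCoeff, ?_⟩
      rw [ha, ← hg, HahnSeries.leadingCoeff_pow' hg0]
    refine ⟨a, hamem, ?_⟩
    -- show algebraMap a = f, i.e. f - C a = 0
    by_contra hne
    set d : LaurentSeries k := f - algebraMap k (LaurentSeries k) a with hd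
    have hdne : d ≠ 0 := sub_ne_zero.2 fun h => hne h.symm
    have hdroots : ∀ n : ℕ, ∃ g : LaurentSeries k, g ^ p ^ n = d := by
      have h1 : f ∈ perfectCore (LaurentSeries k) p := (mem_perfectCore_iff hp).2 hf
      have h2 : algebraMap k (LaurentSeries k) a ∈ perfectCore (LaurentSeries k) p := by
        rw [mem_perfectCore_iff hp]
        intro n
        obtain ⟨b, hb⟩ := (mem_perfectCore_iff hp).1 hamem n
        exact ⟨algebraMap k (LaurentSeries k) b, by rw [← map_pow, hb]⟩
      exact fun n => (mem_perfectCore_iff hp).1 (sub_mem h1 h2) n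
    have hdo : d.order = 0 := order_eq_zero_of_roots hp hdne hdroots
    have hcoeff : d.coeff 0 = 0 := by
      rw [hd, HahnSeries.coeff_sub]
      have : f.coeff 0 = a := by
        rw [ha, HahnSeries.leadingCoeff_eq_coeff_order hf0, horder]
      rw [this]
      have hCa : (algebraMap k (LaurentSeries k)) a = HahnSeries.single (0 : ℤ) a := by
        have : (algebraMap k (LaurentSeries k)) a = HahnSeries.C a := by
          rw [HahnSeries.algebraMap_apply', PowerSeries.algebraMap_apply, Algebra.algebraMap_self, RingHom.id_apply,
            HahnSeries.ofPowerSeries_C]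
        rw [this, HahnSeries.C_apply]
      rw [hCa, HahnSeries.coeff_single_same, sub_self]
    exact HahnSeries.coeff_order_eq_zero.not.2 hdne (hdo ▸ hcoeff)
  · rintro f hfm
    rw [Subfield.mem_map] at hfm
    obtain ⟨a, ha, rfl⟩ := hfm
    rw [mem_perfectCore_iff hp] at ha ⊢
    intro n
    obtain ⟨b, hb⟩ := ha n
    exact ⟨algebraMap k (LaurentSeries k) b, by rw [← map_pow, hb]⟩
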